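/- Lemma (Case (ii), lower bound). Suppose Assumptions 1 and 2 hold, let E ∈ ℝ, and let e* ∈ D(E) minimize d_l + d_u over D(E). If E + δ·Σ_j p̲_j < Σ_j e̲'_j, then Σ_j max(e̲'_j, e*_j + δ·p̲_j) = Σ_j e̲'_j; equivalently, e*_j + δ·p̲_j ≤ e̲'_j for every j. -/
import Mathlib


open Finset

/-- Lemma 3(a) (Case (ii), lower bound). -/
theorem case_ii_lower_bound
    (N : ℕ) (hN : 1 ≤ N) (δ : ℝ) (hδ : 0 < δ)
    (plb pub elb eub elb' eub' : Fin N → ℝ)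
    (hp : ∀ j, plb j ≤ pub j) (he : ∀ j, elb j ≤ eub j)
    (he' : ∀ j, elb' j ≤ eub' j)
    -- Assumption 1 (consistency of constraints)
    (hA1 : ∀ j, ∀ e : ℝ, elb j ≤ e → e ≤ eub j →
      max (elb' j) (e + δ * plb j) ≤ min (eub' j) (e + δ * pub j))
    -- Assumption 2(a)
    (hA2a : ∀ j, ∃ e : ℝ, elb j ≤ e ∧ e ≤ eub j ∧
      elb' j ≤ e + δ * plb j ∧ e + δ * pub j ≤ eub' j)
    -- Assumption 2(b)
    (hA2b : ∀ j, elb j + δ * plb j ≤ elb' j ∧ eub' j ≤ eub j + δ * pub j)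
    (E : ℝ) (estar : Fin N → ℝ)
    -- e* ∈ D(E)
    (hmem : (∀ j, elb j ≤ estar j ∧ estar j ≤ eub j) ∧ ∑ j, estar j = E)
    -- e* minimizes d_l + d_u over D(E)
    (hmin : ∀ e : Fin N → ℝ,
      ((∀ j, elb j ≤ e j ∧ e j ≤ eub j) ∧ ∑ j, e j = E) →
      ((∑ j, (max (estar j + δ * plb j) (elb' j) - (estar j + δ * plb j))) +
       (∑ j, ((estar j + δ * pub j) - min (estar j + δ * pub j) (eub' j)))) ≤
      ((∑ j, (max (e j + δ * plb j) (elb' j) - (e j + δ * plb j))) +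
       (∑ j, ((e j + δ * pub j) - min (e j + δ * pub j) (eub' j)))))
    -- case hypothesis
    (hcase : E + δ * ∑ j, plb j < ∑ j, elb' j) :
    (∑ j, max (elb' j) (estar j + δ * plb j) = ∑ j, elb' j) ∧
    (∀ j, estar j + δ * plb j ≤ elb' j) := by
  classical
  obtain ⟨hbox, hsum⟩ := hmem
  -- upper targets
  set u : Fin N → ℝ := fun j => elb' j - δ * plb j with hu
  have hlu : ∀ j, elb j ≤ u j := fun j => by
    have := (hA2b j).1; simp only [hu]; linarith
  have hue : ∀ j, u j ≤ eub j := fun j => by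
    obtain ⟨x, _, hx2, hx3, _⟩ := hA2a j
    simp only [hu]; linarith
  have hupub : ∀ j, u j + δ * pub j ≤ eub' j := fun j => by
    obtain ⟨x, _, _, hx3, hx4⟩ := hA2a j
    simp only [hu]; linarith
  have hsumu : ∑ j, u j = ∑ j, elb' j - δ * ∑ j, plb j := by
    simp only [hu]; rw [Finset.sum_sub_distrib, Finset.mul_sum]
  have hElt : E < ∑ j, u j := by rw [hsumu]; linarith
  have hEge : ∑ j, elb j ≤ E := by
    rw [← hsum]; exact Finset.sum_le_sum fun j _ => (hbox j).1
  have hS : 0 < ∑ j, u j - ∑ j, elb j := by linarith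
  set t : ℝ := (E - ∑ j, elb j) / (∑ j, u j - ∑ j, elb j) with ht
  have ht0 : 0 ≤ t := div_nonneg (by linarith) (le_of_lt hS)
  have ht1 : t ≤ 1 := by
    rw [ht, div_le_one hS]; linarith
  set e : Fin N → ℝ := fun j => elb j + t * (u j - elb j) with hedef
  have he1 : ∀ j, elb j ≤ e j := fun j => by
    have := mul_nonneg ht0 (by linarith [hlu j] : (0:ℝ) ≤ u j - elb j)
    simp only [hedef]; linarith
  have he2 : ∀ j, e j ≤ u j := fun j => by
    have : t * (u j - elb j) ≤ u j - elb j := by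
      nlinarith [hlu j]
    simp only [hedef]; linarith
  have hesum : ∑ j, e j = E := by
    have : ∑ j, e j = ∑ j, elb j + t * (∑ j, u j - ∑ j, elb j) := by
      simp only [hedef]
      rw [Finset.sum_add_distrib, ← Finset.mul_sum, Finset.sum_sub_distrib]
    rw [this, ht, div_mul_cancel₀ _ (ne_of_gt hS)]; ring
  have hefeas : (∀ j, elb j ≤ e j ∧ e j ≤ eub j) ∧ ∑ j, e j = E :=
    ⟨fun j => ⟨he1 j, le_trans (he2 j) (hue j)⟩, hesum⟩
  have hkey := hmin e hefeas
  -- cost of e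
  have hdl : ∀ j, max (e j + δ * plb j) (elb' j) - (e j + δ * plb j)
      = elb' j - (e j + δ * plb j) := fun j => by
    have : e j + δ * plb j ≤ elb' j := by have := he2 j; simp only [hu] at this; linarith
    rw [max_eq_right this]
  have hdu : ∀ j, (e j + δ * pub j) - min (e j + δ * pub j) (eub' j) = 0 := fun j => by
    have : e j + δ * pub j ≤ eub' j := by
      have := he2 j; have := hupub j; linarith
    rw [min_eq_left this]; ring
  have hcostl : ∑ j, (max (e j + δ * plb j) (elb' j) - (e j + δ * plb j))
      = ∑ j, elb' j - (E + δ * ∑ j, plb j) := by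
    calc ∑ j, (max (e j + δ * plb j) (elb' j) - (e j + δ * plb j))
        = ∑ j, (elb' j - (e j + δ * plb j)) := Finset.sum_congr rfl fun j _ => hdl j
      _ = ∑ j, elb' j - (∑ j, e j + δ * ∑ j, plb j) := by
            rw [Finset.sum_sub_distrib, Finset.sum_add_distrib, Finset.mul_sum]
      _ = ∑ j, elb' j - (E + δ * ∑ j, plb j) := by rw [hesum]
  have hcostu : ∑ j, ((e j + δ * pub j) - min (e j + δ * pub j) (eub' j)) = 0 :=
    Finset.sum_eq_zero fun j _ => hdu j
  rw [hcostl, hcostu] at hkey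
  -- lower bounds on e* cost
  have hstarl : ∑ j, (max (estar j + δ * plb j) (elb' j) - (estar j + δ * plb j))
      = ∑ j, max (estar j + δ * plb j) (elb' j) - (E + δ * ∑ j, plb j) := by
    rw [Finset.sum_sub_distrib, Finset.sum_add_distrib, Finset.mul_sum, hsum]
  have hstaru : 0 ≤ ∑ j, ((estar j + δ * pub j) - min (estar j + δ * pub j) (eub' j)) :=
    Finset.sum_nonneg fun j _ => by
      have := min_le_left (estar j + δ * pub j) (eub' j); linarith
  rw [hstarl] at hkey
  have hsumle : ∑ j, max (estar j + δ * plb j) (elb' j) ≤ ∑ j, elb' j := by linarith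
  have hge : ∀ j ∈ Finset.univ, elb' j ≤ max (estar j + δ * plb j) (elb' j) :=
    fun j _ => le_max_right _ _
  have hsumge : ∑ j, elb' j ≤ ∑ j, max (estar j + δ * plb j) (elb' j) :=
    Finset.sum_le_sum hge
  have hsumeq : ∑ j, max (estar j + δ * plb j) (elb' j) = ∑ j, elb' j :=
    le_antisymm hsumle hsumge
  have heachone : ∀ j ∈ Finset.univ, max (estar j + δ * plb j) (elb' j) = elb' j := by
    have h := (Finset.sum_eq_sum_iff_of_le hge).mp hsumeq.symm
    exact fun j hj => (h j hj).symm
  constructor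
  · calc ∑ j, max (elb' j) (estar j + δ * plb j)
        = ∑ j, max (estar j + δ * plb j) (elb' j) :=
          Finset.sum_congr rfl fun j _ => max_comm _ _
      _ = ∑ j, elb' j := hsumeq
  · intro j
    have := heachone j (Finset.mem_univ j)
    exact max_eq_right_iff.mp this
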